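/- arXiv:2512.10993 — 3 statements merged into one kernel-verified Lean document; each statement's English description precedes it below -/
import Mathlib

section
/- Let σ : ℝ³ → Sym(3,ℝ) be a C¹ symmetric-tensor field, vanishing outside a compact set, with zero diagonal components (σ₁₁ = σ₂₂ = σ₃₃ = 0) and divergence-free (Σᵢ ∂ᵢσᵢⱼ = 0 for each j). Then σ = 0 identically. -/
noncomputable def pd (i : Fin 3) (f : (Fin 3 → ℝ) → ℝ) : (Fin 3 → ℝ) → ℝ :=
  fun x => fderiv ℝ f x (Pi.single i 1)

open MeasureTheory Filter ContinuousLinearMap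
open scoped Convolution

namespace Stmt8Aux

/-- A differentiable compactly supported function with vanishing `i`-th partial is zero. -/
lemma zero_of_pd_zero {f : (Fin 3 → ℝ) → ℝ} (hf : Differentiable ℝ f)
    (hsupp : HasCompactSupport f) (i : Fin 3) (hpd : ∀ x, pd i f x = 0) (x : Fin 3 → ℝ) :
    f x = 0 := by
  obtain ⟨R, hR⟩ := hsupp.isBounded.subset_closedBall 0
  set v : Fin 3 → ℝ := Pi.single i 1 with hv
  set T : ℝ := |R| + ‖x‖ + 1 with hT
  have hg : ∀ t : ℝ, HasDerivAt (fun t : ℝ => f (x + t • v)) (fderiv ℝ f (x + t • v) v) t := by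
    intro t
    have hline : HasDerivAt (fun t : ℝ => x + t • v) v t := by
      simpa using ((hasDerivAt_id t).smul_const v).const_add x
    exact (hf (x + t • v)).hasFDerivAt.comp_hasDerivAt t hline
  have hconst : f (x + (0:ℝ) • v) = f (x + T • v) :=
    is_const_of_deriv_eq_zero (fun t => (hg t).differentiableAt)
      (fun t => by rw [(hg t).deriv]; exact hpd _) 0 T
  have hnot : x + T • v ∉ tsupport f := by
    intro hmem
    have h1 : ‖x + T • v‖ ≤ R := by
      have := hR hmem
      simpa [Metric.mem_closedBall] using this
    have h2 : |x i + T| ≤ ‖x + T • v‖ := by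
      have := norm_le_pi_norm (x + T • v) i
      simpa [hv, Pi.single_eq_same] using this
    have h3 : |x i| ≤ ‖x‖ := by
      have := norm_le_pi_norm x i
      simpa using this
    have h4 : T - |x i| ≤ |x i + T| := by
      have := abs_add_le (x i) T
      have h5 := abs_sub_abs_le_abs_sub (x i + T) (x i)
      simp only [add_sub_cancel_left] at h5
      have : |T| ≤ |x i + T| + |x i| := by
        calc |T| = |x i + T - x i| := by ring_nf
        _ ≤ |x i + T| + |x i| := abs_sub _ _
      have hT' : |T| = T := abs_of_nonneg (by rw [hT]; positivity)
      linarith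
    have hRabs : R ≤ |R| := le_abs_self R
    linarith
  have hzero : f (x + T • v) = 0 := image_eq_zero_of_notMem_tsupport hnot
  have : f (x + (0:ℝ) • v) = f x := by norm_num
  rw [← this, hconst, hzero]


lemma pd_comm {f : (Fin 3 → ℝ) → ℝ} (hf : ContDiff ℝ 2 f) (i j : Fin 3) (x : Fin 3 → ℝ) :
    pd i (pd j f) x = pd j (pd i f) x := by
  have hdf : Differentiable ℝ f := hf.differentiable (by simp)
  have hdf' : Differentiable ℝ (fderiv ℝ f) :=
    (hf.fderiv_right (m := 1) le_rfl).differentiable one_ne_zero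
  have h1 : ∀ (v w y : Fin 3 → ℝ), fderiv ℝ (fun z => fderiv ℝ f z v) y w
      = fderiv ℝ (fderiv ℝ f) y w v := by
    intro v w y
    rw [fderiv_clm_apply (hdf' y) (differentiableAt_const v)]
    simp
  have key := second_derivative_symmetric (f := f) (f' := fderiv ℝ f)
    (f'' := fderiv ℝ (fderiv ℝ f) x) (fun y => (hdf y).hasFDerivAt)
    (hdf' x).hasFDerivAt (Pi.single i 1) (Pi.single j 1)
  unfold pd
  rw [h1, h1, key]

lemma pd_contDiff {f : (Fin 3 → ℝ) → ℝ} (hf : ContDiff ℝ 2 f) (i : Fin 3) :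
    ContDiff ℝ 1 (pd i f) :=
  (hf.fderiv_right (m := 1) le_rfl).clm_apply contDiff_const

lemma pd_hasCompactSupport {f : (Fin 3 → ℝ) → ℝ} (hsupp : HasCompactSupport f) (i : Fin 3) :
    HasCompactSupport (pd i f) := by
  have h := hsupp.fderiv (𝕜 := ℝ)
  exact h.comp_left (g := fun L : (Fin 3 → ℝ) →L[ℝ] ℝ => L (Pi.single i 1)) rfl

lemma pd_neg (g : (Fin 3 → ℝ) → ℝ) (i : Fin 3) :
    pd i (fun x => - g x) = fun x => - pd i g x := by
  funext x
  simp [pd, fderiv_neg]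


lemma smooth_case (τ : Fin 3 → Fin 3 → (Fin 3 → ℝ) → ℝ)
    (hsym : ∀ i j, τ i j = τ j i)
    (hsmooth : ∀ i j, ContDiff ℝ 2 (τ i j))
    (hsupp : ∀ i j, HasCompactSupport (τ i j))
    (hdiag : ∀ i, ∀ x, τ i i x = 0)
    (hdiv : ∀ j : Fin 3, ∀ x, ∑ i : Fin 3, pd i (τ i j) x = 0) :
    ∀ i j, ∀ x, τ i j x = 0 := by
  have hzero : ∀ i, τ i i = fun _ => (0:ℝ) := fun i => funext (hdiag i)
  have hpd_zero : ∀ i x, pd i (τ i i) x = 0 := by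
    intro i x
    rw [hzero i]
    simp [pd]
  -- the three divergence equations
  have hdiv' : ∀ j x, pd 0 (τ 0 j) x + pd 1 (τ 1 j) x + pd 2 (τ 2 j) x = 0 := by
    intro j x
    have := hdiv j x
    rwa [Fin.sum_univ_three] at this
  have e1 : pd 1 (τ 0 1) = fun x => - pd 2 (τ 0 2) x := by
    funext x
    have := hdiv' 0 x
    rw [hpd_zero 0 x, hsym 1 0, hsym 2 0] at this
    linarith
  have e2 : pd 0 (τ 0 1) = fun x => - pd 2 (τ 1 2) x := by
    funext x
    have := hdiv' 1 x
    rw [hpd_zero 1 x, hsym 2 1] at this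
    linarith
  have e3 : pd 0 (τ 0 2) = fun x => - pd 1 (τ 1 2) x := by
    funext x
    have := hdiv' 2 x
    rw [hpd_zero 2 x] at this
    linarith
  -- second-order identities
  have hXY : ∀ x, pd 0 (pd 1 (τ 0 1)) x = - pd 0 (pd 2 (τ 0 2)) x := by
    intro x; rw [e1, pd_neg]
  have hXZ : ∀ x, pd 0 (pd 1 (τ 0 1)) x = - pd 1 (pd 2 (τ 1 2)) x := by
    intro x
    rw [pd_comm (hsmooth 0 1) 0 1 x, e2, pd_neg]
  have hYZ : ∀ x, pd 0 (pd 2 (τ 0 2)) x = - pd 1 (pd 2 (τ 1 2)) x := by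
    intro x
    rw [pd_comm (hsmooth 0 2) 0 2 x, e3, pd_neg]
    simp only [neg_neg, neg_inj]
    exact pd_comm (hsmooth 1 2) 2 1 x
  have hZ : ∀ x, pd 1 (pd 2 (τ 1 2)) x = 0 := by
    intro x
    have h1 := hXY x
    have h2 := hXZ x
    have h3 := hYZ x
    linarith
  have hX : ∀ x, pd 0 (pd 1 (τ 0 1)) x = 0 := fun x => by rw [hXZ x, hZ x]; ring
  have hY : ∀ x, pd 0 (pd 2 (τ 0 2)) x = 0 := fun x => by rw [hYZ x, hZ x]; ring
  -- kill the shears by integrating along lines twice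
  have hc0 : ∀ x, τ 0 1 x = 0 := by
    have h1 : ∀ x, pd 1 (τ 0 1) x = 0 :=
      zero_of_pd_zero ((pd_contDiff (hsmooth 0 1) 1).differentiable one_ne_zero)
        (pd_hasCompactSupport (hsupp 0 1) 1) 0 hX
    exact zero_of_pd_zero ((hsmooth 0 1).differentiable (by simp)) (hsupp 0 1) 1 h1
  have hb0 : ∀ x, τ 0 2 x = 0 := by
    have h1 : ∀ x, pd 2 (τ 0 2) x = 0 :=
      zero_of_pd_zero ((pd_contDiff (hsmooth 0 2) 2).differentiable one_ne_zero)
        (pd_hasCompactSupport (hsupp 0 2) 2) 0 hY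
    exact zero_of_pd_zero ((hsmooth 0 2).differentiable (by simp)) (hsupp 0 2) 2 h1
  have ha0 : ∀ x, τ 1 2 x = 0 := by
    have h1 : ∀ x, pd 2 (τ 1 2) x = 0 :=
      zero_of_pd_zero ((pd_contDiff (hsmooth 1 2) 2).differentiable one_ne_zero)
        (pd_hasCompactSupport (hsupp 1 2) 2) 1 hZ
    exact zero_of_pd_zero ((hsmooth 1 2).differentiable (by simp)) (hsupp 1 2) 2 h1
  intro i j x
  fin_cases i <;> fin_cases j
  · exact hdiag 0 x
  · exact hc0 x
  · exact hb0 x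
  · exact (congrFun (hsym 1 0) x).trans (hc0 x)
  · exact hdiag 1 x
  · exact ha0 x
  · exact (congrFun (hsym 2 0) x).trans (hb0 x)
  · exact (congrFun (hsym 2 1) x).trans (ha0 x)
  · exact hdiag 2 x


lemma pd_conv (ρ : (Fin 3 → ℝ) → ℝ) (hρ : MeasureTheory.LocallyIntegrable ρ volume)
    {g : (Fin 3 → ℝ) → ℝ} (hg : ContDiff ℝ 1 g) (hcg : HasCompactSupport g)
    (k : Fin 3) (x : Fin 3 → ℝ) :
    pd k (ρ ⋆[ContinuousLinearMap.lsmul ℝ ℝ, volume] g) x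
      = (ρ ⋆[ContinuousLinearMap.lsmul ℝ ℝ, volume] pd k g) x := by
  have hD := hcg.hasFDerivAt_convolution_right (ContinuousLinearMap.lsmul ℝ ℝ) hρ hg x
  have h1 : pd k (ρ ⋆[ContinuousLinearMap.lsmul ℝ ℝ, volume] g) x
      = (ρ ⋆[(ContinuousLinearMap.lsmul ℝ ℝ).precompR (Fin 3 → ℝ), volume] fderiv ℝ g) x
          (Pi.single k 1) := by
    unfold pd
    rw [hD.fderiv]
  rw [h1, convolution_precompR_apply (ContinuousLinearMap.lsmul ℝ ℝ) hρ (hcg.fderiv (𝕜 := ℝ))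
    (hg.continuous_fderiv one_ne_zero) x (Pi.single k 1)]
  rfl

end Stmt8Aux

theorem stmt8 (σ : Fin 3 → Fin 3 → (Fin 3 → ℝ) → ℝ)
    (hsym : ∀ i j, σ i j = σ j i)
    (hsmooth : ∀ i j, ContDiff ℝ 1 (σ i j))
    (hsupp : ∀ i j, HasCompactSupport (σ i j))
    (hdiag : ∀ i, ∀ x, σ i i x = 0)
    (hdiv : ∀ j : Fin 3, ∀ x, ∑ i : Fin 3, pd i (σ i j) x = 0) :
    ∀ i j, ∀ x, σ i j x = 0 := by
  intro i j x
  let φ : ℕ → ContDiffBump (0 : Fin 3 → ℝ) := fun n =>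
    { rIn := ((n:ℝ)+1)⁻¹
      rOut := 2 * ((n:ℝ)+1)⁻¹
      rIn_pos := by positivity
      rIn_lt_rOut := by
        have : (0:ℝ) < ((n:ℝ)+1)⁻¹ := by positivity
        linarith }
  have hφ : Filter.Tendsto (fun n => (φ n).rOut) Filter.atTop (nhds 0) := by
    have h0 : Filter.Tendsto (fun n : ℕ => ((n:ℝ)+1)⁻¹) Filter.atTop (nhds 0) := by
      simpa [one_div] using tendsto_one_div_add_atTop_nhds_zero_nat (𝕜 := ℝ)
    have := h0.const_mul (2:ℝ)
    simpa using this
  have hzero : ∀ n : ℕ, ((φ n).normed volume ⋆[ContinuousLinearMap.lsmul ℝ ℝ, volume] σ i j) x = 0 := by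
    intro n
    set ρ := (φ n).normed volume with hρdef
    have hρc : ContDiff ℝ 2 ρ := (φ n).contDiff_normed
    have hρsupp : HasCompactSupport ρ := (φ n).hasCompactSupport_normed
    have hρl : MeasureTheory.LocallyIntegrable ρ volume :=
      ((φ n).integrable_normed).locallyIntegrable
    have hs1 : ∀ i j, (fun i j => ρ ⋆[ContinuousLinearMap.lsmul ℝ ℝ, volume] σ i j) i j
        = (fun i j => ρ ⋆[ContinuousLinearMap.lsmul ℝ ℝ, volume] σ i j) j i := by
      intro i j; simp only; rw [hsym i j]
    have hs2 : ∀ i j, ContDiff ℝ 2 (ρ ⋆[ContinuousLinearMap.lsmul ℝ ℝ, volume] σ i j) := by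
      intro i j
      exact hρsupp.contDiff_convolution_left (ContinuousLinearMap.lsmul ℝ ℝ) hρc
        ((hsmooth i j).continuous.locallyIntegrable)
    have hs3 : ∀ i j, HasCompactSupport (ρ ⋆[ContinuousLinearMap.lsmul ℝ ℝ, volume] σ i j) := by
      intro i j
      exact hρsupp.convolution (ContinuousLinearMap.lsmul ℝ ℝ) (hsupp i j)
    have hs4 : ∀ (i : Fin 3) (y : Fin 3 → ℝ), (ρ ⋆[ContinuousLinearMap.lsmul ℝ ℝ, volume] σ i i) y = 0 := by
      intro i y
      have h0 : σ i i = (0 : (Fin 3 → ℝ) → ℝ) := funext (hdiag i)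
      rw [h0, convolution_zero]
      rfl
    have hs5 : ∀ (j : Fin 3) (y : Fin 3 → ℝ),
        ∑ i : Fin 3, pd i (ρ ⋆[ContinuousLinearMap.lsmul ℝ ℝ, volume] σ i j) y = 0 := by
      intro j y
      rw [Fin.sum_univ_three,
        Stmt8Aux.pd_conv ρ hρl (hsmooth 0 j) (hsupp 0 j) 0 y,
        Stmt8Aux.pd_conv ρ hρl (hsmooth 1 j) (hsupp 1 j) 1 y,
        Stmt8Aux.pd_conv ρ hρl (hsmooth 2 j) (hsupp 2 j) 2 y]
      have hI : ∀ k : Fin 3, MeasureTheory.Integrable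
          (fun t => ContinuousLinearMap.lsmul ℝ ℝ (ρ t) (pd k (σ k j) (y - t))) volume := by
        intro k
        have hck : HasCompactSupport (pd k (σ k j)) := Stmt8Aux.pd_hasCompactSupport (hsupp k j) k
        have hcont : Continuous (pd k (σ k j)) := by
          have := ((hsmooth k j).continuous_fderiv one_ne_zero)
          exact this.clm_apply continuous_const
        exact hck.convolutionExists_right (ContinuousLinearMap.lsmul ℝ ℝ) hρl hcont y
      rw [convolution_def, convolution_def, convolution_def]
      have h1 : ((∫ t, ContinuousLinearMap.lsmul ℝ ℝ (ρ t) (pd 0 (σ 0 j) (y - t)) ∂volume)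
            + ∫ t, ContinuousLinearMap.lsmul ℝ ℝ (ρ t) (pd 1 (σ 1 j) (y - t)) ∂volume)
            + ∫ t, ContinuousLinearMap.lsmul ℝ ℝ (ρ t) (pd 2 (σ 2 j) (y - t)) ∂volume
          = ∑ k : Fin 3, ∫ t, ContinuousLinearMap.lsmul ℝ ℝ (ρ t) (pd k (σ k j) (y - t)) ∂volume := by
        rw [Fin.sum_univ_three]
      rw [h1, ← MeasureTheory.integral_finset_sum _ (fun k _ => hI k)]
      have hint : ∀ t, ∑ k : Fin 3, ContinuousLinearMap.lsmul ℝ ℝ (ρ t)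
          (pd k (σ k j) (y - t)) = 0 := by
        intro t
        have hd := hdiv j (y - t)
        simp only [ContinuousLinearMap.lsmul_apply, ← Finset.smul_sum]
        rw [hd, smul_zero]
      simp only [hint, MeasureTheory.integral_zero]
    exact Stmt8Aux.smooth_case (fun i j => ρ ⋆[ContinuousLinearMap.lsmul ℝ ℝ, volume] σ i j) hs1 hs2 hs3 hs4 hs5 i j x
  have hlim : Filter.Tendsto (fun n => ((φ n).normed volume ⋆[ContinuousLinearMap.lsmul ℝ ℝ, volume] σ i j) x)
      Filter.atTop (nhds (σ i j x)) :=
    ContDiffBump.convolution_tendsto_right_of_continuous (μ := volume) hφ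
      (hsmooth i j).continuous x
  exact tendsto_nhds_unique (hlim.congr hzero) tendsto_const_nhds
end

section
/- Let ε* be a symmetric 3×3 tensor field on ℝ³ with C³ components. Then there exists a C² vector field u : ℝ³ → ℝ³ such that ∂₁u₂ + ∂₂u₁ = 2ε*₁₂, ∂₁u₃ + ∂₃u₁ = 2ε*₁₃, and ∂₂u₃ + ∂₃u₂ = 2ε*₂₃; i.e., the off-diagonal components of the symmetric gradient ∇ₛu equal the off-diagonal components of ε*. -/
set_option synthInstance.maxHeartbeats 1000000
set_option linter.unusedSectionVars false
open MeasureTheory intervalIntegral Set Function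

abbrev E3 : Type := Fin 3 → ℝ

variable {F : Type*} [NormedAddCommGroup F] [NormedSpace ℝ F] [CompleteSpace F]

noncomputable def pF (G : E3 × ℝ → F) (p : E3 × ℝ) : E3 →L[ℝ] F :=
  (fderiv ℝ G p).comp (ContinuousLinearMap.inl ℝ E3 ℝ)

lemma key1 {G : E3 × ℝ → F} (hG : ContDiff ℝ 1 G) (x₀ : E3) :
    HasFDerivAt (fun x => ∫ s in (0:ℝ)..1, G (x, s))
      (∫ s in (0:ℝ)..1, pF G (x₀, s)) x₀ := by
  have hGc : Continuous G := hG.continuous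
  have hfd : Continuous (fderiv ℝ G) := hG.continuous_fderiv one_ne_zero
  have hpF : Continuous (pF G) := hfd.clm_comp continuous_const
  obtain ⟨M, hM⟩ := ((isCompact_closedBall x₀ 1).prod (isCompact_Icc (a := (-1:ℝ)) (b := 2))).exists_bound_of_continuousOn hpF.continuousOn
  have hmemI : ∀ t : ℝ, t ∈ Set.uIoc (0:ℝ) 1 → t ∈ Icc (-1:ℝ) 2 := by
    intro t ht
    rw [uIoc_of_le (by norm_num : (0:ℝ) ≤ 1)] at ht
    exact ⟨by linarith [ht.1], by linarith [ht.2]⟩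
  apply intervalIntegral.hasFDerivAt_integral_of_dominated_of_fderiv_le
    (F := fun x t => G (x, t)) (F' := fun x t => pF G (x, t)) (bound := fun _ => M)
    (Metric.ball_mem_nhds x₀ one_pos)
  · exact Filter.Eventually.of_forall fun x =>
      (hGc.comp (continuous_const.prodMk continuous_id)).aestronglyMeasurable
  · exact (hGc.comp (continuous_const.prodMk continuous_id)).intervalIntegrable 0 1
  · exact (hpF.comp (continuous_const.prodMk continuous_id)).aestronglyMeasurable
  · exact ae_of_all _ fun t ht x hx =>
      hM (x, t) ⟨Metric.ball_subset_closedBall hx, hmemI t ht⟩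
  · exact intervalIntegrable_const
  · refine ae_of_all _ fun t ht x hx => ?_
    have h1 : HasFDerivAt G (fderiv ℝ G (x, t)) (x, t) :=
      (hG.differentiable one_ne_zero (x, t)).hasFDerivAt
    exact h1.comp x (hasFDerivAt_prodMk_left x t)

lemma key2 (n : ℕ) {F : Type*} [NormedAddCommGroup F] [NormedSpace ℝ F] [CompleteSpace F]
    {G : E3 × ℝ → F} (hG : ContDiff ℝ n G) :
    ContDiff ℝ n (fun x => ∫ s in (0:ℝ)..1, G (x, s)) := by
  induction n generalizing F with
  | zero =>
      simp only [Nat.cast_zero, contDiff_zero] at hG ⊢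
      exact continuous_parametric_intervalIntegral_of_continuous' (μ := volume)
        (f := fun x t => G (x, t)) hG 0 1
  | succ n ih =>
      have hcast : ((n + 1 : ℕ) : WithTop ℕ∞) = (n : WithTop ℕ∞) + 1 := by push_cast; rfl
      rw [hcast] at hG
      have hG1 : ContDiff ℝ 1 G := hG.of_le (by
        have : (1 : WithTop ℕ∞) ≤ (n : WithTop ℕ∞) + 1 := le_add_self
        exact this)
      have hG' : ContDiff ℝ n (pF G) :=
        (hG.fderiv_right (le_refl _)).clm_comp contDiff_const
      rw [hcast, contDiff_succ_iff_fderiv]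
      refine ⟨fun x => (key1 hG1 x).differentiableAt, by simp, ?_⟩
      have heq : fderiv ℝ (fun x => ∫ s in (0:ℝ)..1, G (x, s))
          = fun x => ∫ s in (0:ℝ)..1, pF G (x, s) :=
        funext fun x => (key1 hG1 x).fderiv
      rw [heq]
      exact ih hG'

noncomputable def Aop (i : Fin 3) (f : E3 → ℝ) : E3 → ℝ :=
  fun x => ∫ s in (0:ℝ)..1, x i * f (Function.update x i (s * x i))

noncomputable def Gf (i : Fin 3) (f : E3 → ℝ) : E3 × ℝ → ℝ :=
  fun p => p.1 i * f (Function.update p.1 i (p.2 * p.1 i))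

lemma update_eq (x : E3) (i : Fin 3) (c : ℝ) :
    Function.update x i c = x + (c - x i) • (Pi.single i 1 : E3) := by
  funext j
  rcases eq_or_ne j i with h | h
  · subst h; simp
  · simp [Function.update_apply, h, Pi.single_apply]

lemma contDiff_Gf {n : WithTop ℕ∞} (i : Fin 3) {f : E3 → ℝ} (hf : ContDiff ℝ n f) :
    ContDiff ℝ n (Gf i f) := by
  have h1 : ContDiff ℝ n (fun p : E3 × ℝ => p.1 i) :=
    ((ContinuousLinearMap.proj (R := ℝ) (φ := fun _ : Fin 3 => ℝ) i).comp
      (ContinuousLinearMap.fst ℝ E3 ℝ)).contDiff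
  have h2 : ContDiff ℝ n (fun p : E3 × ℝ => Function.update p.1 i (p.2 * p.1 i)) := by
    have he : (fun p : E3 × ℝ => Function.update p.1 i (p.2 * p.1 i))
        = fun p : E3 × ℝ => p.1 + (p.2 * p.1 i - p.1 i) • (Pi.single i 1 : E3) := by
      funext p; rw [update_eq]
    rw [he]
    exact contDiff_fst.add (((contDiff_snd.mul h1).sub h1).smul contDiff_const)
  exact h1.mul (hf.comp h2)

lemma contDiff_Aop {n : ℕ} (i : Fin 3) {f : E3 → ℝ} (hf : ContDiff ℝ n f) :
    ContDiff ℝ n (Aop i f) :=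
  key2 n (contDiff_Gf i hf)

lemma intervalIntegral_clm_apply {Φ : ℝ → E3 →L[ℝ] ℝ} (h : IntervalIntegrable Φ volume 0 1)
    (v : E3) : (∫ s in (0:ℝ)..1, Φ s) v = ∫ s in (0:ℝ)..1, Φ s v := by
  rw [integral_of_le (by norm_num : (0:ℝ) ≤ 1), integral_of_le (by norm_num : (0:ℝ) ≤ 1)]
  exact ContinuousLinearMap.integral_apply h.1 v

lemma fderiv_Gf_apply (i : Fin 3) {f : E3 → ℝ} (hf : ContDiff ℝ 1 f) (x : E3) (s : ℝ)
    (v : E3) :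
    fderiv ℝ (Gf i f) (x, s) (v, (0:ℝ)) =
      x i * fderiv ℝ f (Function.update x i (s * x i))
          (v + (s * v i - v i) • (Pi.single i 1 : E3))
        + f (Function.update x i (s * x i)) * v i := by
  set π : E3 × ℝ →L[ℝ] ℝ :=
    (ContinuousLinearMap.proj (R := ℝ) (φ := fun _ : Fin 3 => ℝ) i).comp
      (ContinuousLinearMap.fst ℝ E3 ℝ) with hπdef
  set σ : E3 × ℝ →L[ℝ] ℝ := ContinuousLinearMap.snd ℝ E3 ℝ with hσdef
  have hα : HasFDerivAt (fun p : E3 × ℝ => p.2 * p.1 i) (s • π + x i • σ) (x, s) :=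
    (σ.hasFDerivAt (x := ((x, s) : E3 × ℝ))).mul (π.hasFDerivAt (x := ((x, s) : E3 × ℝ)))
  have hηfun : (fun p : E3 × ℝ => Function.update p.1 i (p.2 * p.1 i))
      = fun p : E3 × ℝ => p.1 + (p.2 * p.1 i - p.1 i) • (Pi.single i 1 : E3) :=
    funext fun p => update_eq _ _ _
  have hη : HasFDerivAt (fun p : E3 × ℝ => Function.update p.1 i (p.2 * p.1 i))
      ((ContinuousLinearMap.fst ℝ E3 ℝ)
        + ((s • π + x i • σ) - π).smulRight (Pi.single i 1 : E3)) (x, s) := by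
    rw [hηfun]
    exact (ContinuousLinearMap.fst ℝ E3 ℝ).hasFDerivAt.add
      ((hα.sub π.hasFDerivAt).smul_const _)
  have hfd : HasFDerivAt f (fderiv ℝ f (Function.update x i (s * x i)))
      (Function.update x i (s * x i)) :=
    (hf.differentiable one_ne_zero _).hasFDerivAt
  have hcomp := hfd.comp ((x, s) : E3 × ℝ) hη
  have hG : HasFDerivAt (Gf i f)
      (x i • ((fderiv ℝ f (Function.update x i (s * x i))).comp
          ((ContinuousLinearMap.fst ℝ E3 ℝ)
            + ((s • π + x i • σ) - π).smulRight (Pi.single i 1 : E3)))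
        + f (Function.update x i (s * x i)) • π) (x, s) :=
    (π.hasFDerivAt (x := ((x, s) : E3 × ℝ))).mul hcomp
  rw [hG.fderiv]
  simp [hπdef, hσdef, mul_zero, add_zero, smul_eq_mul]
  ring

lemma contDiff_pd {n : WithTop ℕ∞} {f : E3 → ℝ} (hf : ContDiff ℝ (n + 1) f) (j : Fin 3) :
    ContDiff ℝ n (pd j f) :=
  (hf.fderiv_right le_rfl).clm_apply contDiff_const

lemma continuous_pd {f : E3 → ℝ} (hf : ContDiff ℝ 1 f) (j : Fin 3) :
    Continuous (pd j f) :=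
  (contDiff_pd (n := 0) (by simpa using hf) j).continuous

lemma continuous_path (x : E3) (i : Fin 3) :
    Continuous fun s : ℝ => Function.update x i (s * x i) := by
  have heq : (fun s : ℝ => Function.update x i (s * x i))
      = fun s : ℝ => x + (s * x i - x i) • (Pi.single i 1 : E3) :=
    funext fun s => update_eq _ _ _
  rw [heq]; fun_prop

lemma cont_integrand (i : Fin 3) {f : E3 → ℝ} (hf : ContDiff ℝ 1 f) (x : E3) (w : E3 × ℝ) :
    Continuous fun s : ℝ => fderiv ℝ (Gf i f) (x, s) w := by
  have h1 : Continuous fun s : ℝ => fderiv ℝ (Gf i f) (x, s) :=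
    ((contDiff_Gf i hf).continuous_fderiv one_ne_zero).comp (continuous_const.prodMk continuous_id)
  exact (ContinuousLinearMap.apply ℝ ℝ w).continuous.comp h1

lemma pd_Aop (i j : Fin 3) {f : E3 → ℝ} (hf : ContDiff ℝ 1 f) (x : E3) :
    pd j (Aop i f) x = ∫ s in (0:ℝ)..1, fderiv ℝ (Gf i f) (x, s) (Pi.single j 1, 0) := by
  have h := key1 (contDiff_Gf i hf) x
  have hint : IntervalIntegrable (fun s => pF (Gf i f) (x, s)) volume 0 1 :=
    (((((contDiff_Gf i hf).continuous_fderiv one_ne_zero).clm_comp continuous_const)).comp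
      (continuous_const.prodMk continuous_id)).intervalIntegrable 0 1
  show fderiv ℝ (Aop i f) x (Pi.single j 1) = _
  have hA : Aop i f = fun x => ∫ s in (0:ℝ)..1, Gf i f (x, s) := rfl
  rw [hA, h.fderiv, intervalIntegral_clm_apply hint]
  congr 1

lemma hasDerivAt_path (i : Fin 3) {f : E3 → ℝ} (hf : ContDiff ℝ 1 f) (x : E3) (s : ℝ) :
    HasDerivAt (fun s : ℝ => f (Function.update x i (s * x i)))
      (x i * pd i f (Function.update x i (s * x i))) s := by
  have hγ : HasDerivAt (fun s : ℝ => Function.update x i (s * x i))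
      ((x i) • (Pi.single i 1 : E3)) s := by
    have heq : (fun s : ℝ => Function.update x i (s * x i))
        = fun s : ℝ => x + (s * x i - x i) • (Pi.single i 1 : E3) :=
      funext fun s => update_eq _ _ _
    rw [heq]
    have h1 : HasDerivAt (fun s : ℝ => s * x i - x i) (x i) s := by
      simpa using ((hasDerivAt_id s).mul_const (x i)).sub_const (x i)
    simpa using (h1.smul_const ((Pi.single i 1 : E3))).const_add x
  have h2 := ((hf.differentiable one_ne_zero _).hasFDerivAt).comp_hasDerivAt s hγ
  exact h2.congr_deriv (by simp [pd, smul_eq_mul])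

lemma pd_Aop_ne {i j : Fin 3} (hij : j ≠ i) {f : E3 → ℝ} (hf : ContDiff ℝ 1 f) (x : E3) :
    pd j (Aop i f) x = Aop i (pd j f) x := by
  rw [pd_Aop i j hf x]
  show _ = ∫ s in (0:ℝ)..1, x i * (pd j f) (Function.update x i (s * x i))
  congr 1
  funext s
  rw [fderiv_Gf_apply i hf x s]
  have h0 : (Pi.single j 1 : E3) i = 0 := by
    simp [Pi.single_apply, (Ne.symm hij)]
  rw [h0]
  simp [pd]

lemma pd_Aop_self (i : Fin 3) {f : E3 → ℝ} (hf : ContDiff ℝ 1 f) (x : E3) :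
    pd i (Aop i f) x = f x := by
  rw [pd_Aop i i hf x]
  have key : ∀ s ∈ uIcc (0:ℝ) 1,
      HasDerivAt (fun s : ℝ => s * f (Function.update x i (s * x i)))
        (fderiv ℝ (Gf i f) (x, s) (Pi.single i 1, 0)) s := by
    intro s _
    have h := (hasDerivAt_id s).mul (hasDerivAt_path i hf x s)
    rw [fderiv_Gf_apply i hf x s]
    refine HasDerivAt.congr_deriv h ?_
    simp [pd, Pi.single_eq_same]
    ring
  rw [integral_eq_sub_of_hasDerivAt key ((cont_integrand i hf x _).intervalIntegrable 0 1)]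
  simp [Function.update_eq_self]

lemma Aop_pd_self (i : Fin 3) {f : E3 → ℝ} (hf : ContDiff ℝ 1 f) (x : E3) :
    Aop i (pd i f) x = f x - f (Function.update x i 0) := by
  have key : ∀ s ∈ uIcc (0:ℝ) 1,
      HasDerivAt (fun s : ℝ => f (Function.update x i (s * x i)))
        (x i * pd i f (Function.update x i (s * x i))) s :=
    fun s _ => hasDerivAt_path i hf x s
  have hint : IntervalIntegrable
      (fun s => x i * pd i f (Function.update x i (s * x i))) volume 0 1 :=
    (continuous_const.mul ((continuous_pd hf i).comp (continuous_path x i))).intervalIntegrable 0 1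
  show (∫ s in (0:ℝ)..1, x i * pd i f (Function.update x i (s * x i))) = _
  rw [integral_eq_sub_of_hasDerivAt key hint]
  norm_num [Function.update_eq_self]

lemma pd_add (j : Fin 3) {f g : E3 → ℝ} {x : E3} (hf : DifferentiableAt ℝ f x)
    (hg : DifferentiableAt ℝ g x) :
    pd j (fun y => f y + g y) x = pd j f x + pd j g x := by
  unfold pd
  rw [fderiv_fun_add hf hg]
  simp

lemma Aop_congr (i : Fin 3) {f g : E3 → ℝ} (h : ∀ y, f y = g y) (x : E3) :
    Aop i f x = Aop i g x := by
  have : f = g := funext h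
  rw [this]

lemma Aop_add (i : Fin 3) {f g : E3 → ℝ} (hf : Continuous f) (hg : Continuous g) (x : E3) :
    Aop i (fun y => f y + g y) x = Aop i f x + Aop i g x := by
  unfold Aop
  have c1 : Continuous (fun s : ℝ => x i * f (Function.update x i (s * x i))) :=
    continuous_const.mul (hf.comp (continuous_path x i))
  have c2 : Continuous (fun s : ℝ => x i * g (Function.update x i (s * x i))) :=
    continuous_const.mul (hg.comp (continuous_path x i))
  rw [← intervalIntegral.integral_add (c1.intervalIntegrable 0 1) (c2.intervalIntegrable 0 1)]
  congr 1
  funext s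
  ring

noncomputable def Tz (k : Fin 3) : E3 →L[ℝ] E3 :=
  ContinuousLinearMap.id ℝ E3
    - (ContinuousLinearMap.proj (R := ℝ) (φ := fun _ : Fin 3 => ℝ) k).smulRight
        (Pi.single k 1 : E3)

lemma Tz_apply (k : Fin 3) (y : E3) : Tz k y = Function.update y k 0 := by
  funext j
  rcases eq_or_ne j k with h | h
  · subst h
    simp [Tz, Pi.single_eq_same]
  · simp [Tz, Function.update_apply, h, Pi.single_apply]

lemma pd_comp_update (k j : Fin 3) {e : E3 → ℝ} (he : ContDiff ℝ 1 e) (c : ℝ) (x : E3) :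
    pd j (fun y => c * e (Function.update y k 0)) x
      = if j = k then 0 else c * pd j e (Function.update x k 0) := by
  have hfun : (fun y => c * e (Function.update y k 0)) = fun y => c * e (Tz k y) := by
    funext y; rw [Tz_apply]
  have hD : HasFDerivAt (fun y => c * e (Tz k y))
      (c • ((fderiv ℝ e (Tz k x)).comp (Tz k))) x :=
    (((he.differentiable one_ne_zero _).hasFDerivAt).comp x (Tz k).hasFDerivAt).const_mul c
  rw [hfun]
  show fderiv ℝ (fun y => c * e (Tz k y)) x (Pi.single j 1) = _
  rw [hD.fderiv]
  rcases eq_or_ne j k with h | h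
  · subst h
    have hz : Tz j (Pi.single j 1 : E3) = 0 := by simp [Tz, Pi.single_eq_same]
    simp [hz]
  · have hz : Tz k (Pi.single j 1 : E3) = (Pi.single j 1 : E3) := by
      simp [Tz, Pi.single_apply, Ne.symm h]
    simp [hz, h, pd, Tz_apply]

lemma contDiff_comp_update {n : WithTop ℕ∞} (k : Fin 3) {e : E3 → ℝ} (he : ContDiff ℝ n e)
    (c : ℝ) : ContDiff ℝ n (fun y => c * e (Function.update y k 0)) := by
  have hfun : (fun y : E3 => c * e (Function.update y k 0)) = fun y => c * e (Tz k y) := by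
    funext y; rw [Tz_apply]
  rw [hfun]
  exact contDiff_const.mul (he.comp (Tz k).contDiff)

lemma Aop_zero (i : Fin 3) (x : E3) : Aop i (fun _ => (0:ℝ)) x = 0 := by
  unfold Aop; simp

lemma pd_const_mul (j : Fin 3) {f : E3 → ℝ} (c : ℝ) {x : E3} (hf : DifferentiableAt ℝ f x) :
    pd j (fun y => c * f y) x = c * pd j f x := by
  unfold pd
  rw [fderiv_const_mul hf]
  simp

theorem stmt13 (ε12 ε13 ε23 : (Fin 3 → ℝ) → ℝ)
    (h12 : ContDiff ℝ 3 ε12) (h13 : ContDiff ℝ 3 ε13) (h23 : ContDiff ℝ 3 ε23) :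
    ∃ u : Fin 3 → (Fin 3 → ℝ) → ℝ,
      (∀ i, ContDiff ℝ 2 (u i)) ∧
      (∀ x, pd 0 (u 1) x + pd 1 (u 0) x = 2 * ε12 x) ∧
      (∀ x, pd 0 (u 2) x + pd 2 (u 0) x = 2 * ε13 x) ∧
      (∀ x, pd 1 (u 2) x + pd 2 (u 1) x = 2 * ε23 x) := by
  -- casts
  have h12' : ContDiff ℝ ((2:WithTop ℕ∞) + 1) ε12 := by
    have : ((2:WithTop ℕ∞) + 1) = 3 := by norm_num
    rw [this]; exact h12
  have h13' : ContDiff ℝ ((2:WithTop ℕ∞) + 1) ε13 := by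
    have : ((2:WithTop ℕ∞) + 1) = 3 := by norm_num
    rw [this]; exact h13
  have h23' : ContDiff ℝ ((2:WithTop ℕ∞) + 1) ε23 := by
    have : ((2:WithTop ℕ∞) + 1) = 3 := by norm_num
    rw [this]; exact h23
  have castN : ∀ {g : E3 → ℝ}, ContDiff ℝ 2 g → ContDiff ℝ ((2:ℕ) : WithTop ℕ∞) g :=
    fun h => by exact_mod_cast h
  have castN' : ∀ {g : E3 → ℝ}, ContDiff ℝ ((2:ℕ) : WithTop ℕ∞) g → ContDiff ℝ 2 g :=
    fun h => by exact_mod_cast h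
  -- the derivative fields
  set f1 : E3 → ℝ := fun y => -pd 0 ε23 y + pd 1 ε13 y + pd 2 ε12 y with hf1def
  set f2 : E3 → ℝ := fun y => pd 0 ε23 y - pd 1 ε13 y + pd 2 ε12 y with hf2def
  set f3 : E3 → ℝ := fun y => pd 0 ε23 y + pd 1 ε13 y - pd 2 ε12 y with hf3def
  set g2 : E3 → ℝ := fun y => 2 * ε12 (Function.update y 2 0) with hg2def
  set h2 : E3 → ℝ := fun y => 2 * ε23 (Function.update y 0 0) with hh2def
  set g3 : E3 → ℝ := fun y => 2 * ε13 (Function.update y 1 0) with hg3def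
  have hp23 : ContDiff ℝ 2 (pd 0 ε23) := contDiff_pd h23' 0
  have hp13 : ContDiff ℝ 2 (pd 1 ε13) := contDiff_pd h13' 1
  have hp12 : ContDiff ℝ 2 (pd 2 ε12) := contDiff_pd h12' 2
  have hf1 : ContDiff ℝ 2 f1 := (hp23.neg.add hp13).add hp12
  have hf2 : ContDiff ℝ 2 f2 := (hp23.sub hp13).add hp12
  have hf3 : ContDiff ℝ 2 f3 := (hp23.add hp13).sub hp12
  have hg2 : ContDiff ℝ 2 g2 := contDiff_comp_update 2 (h12.of_le (by norm_num)) 2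
  have hh2 : ContDiff ℝ 2 h2 := contDiff_comp_update 0 (h23.of_le (by norm_num)) 2
  have hg3 : ContDiff ℝ 2 g3 := contDiff_comp_update 1 (h13.of_le (by norm_num)) 2
  -- inner antiderivatives
  have hA2f1 : ContDiff ℝ 2 (Aop 2 f1) := castN' (contDiff_Aop 2 (castN hf1))
  have hA2f2 : ContDiff ℝ 2 (Aop 2 f2) := castN' (contDiff_Aop 2 (castN hf2))
  have hA1f3 : ContDiff ℝ 2 (Aop 1 f3) := castN' (contDiff_Aop 1 (castN hf3))
  -- the displacement components
  set u0 : E3 → ℝ := Aop 1 (Aop 2 f1) with hu0def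
  set u1 : E3 → ℝ := fun y => Aop 0 (Aop 2 f2) y + Aop 0 g2 y + Aop 2 h2 y with hu1def
  set u2 : E3 → ℝ := fun y => Aop 0 (Aop 1 f3) y + Aop 0 g3 y with hu2def
  have hu0 : ContDiff ℝ 2 u0 := castN' (contDiff_Aop 1 (castN hA2f1))
  have hu1a : ContDiff ℝ 2 (Aop 0 (Aop 2 f2)) := castN' (contDiff_Aop 0 (castN hA2f2))
  have hu1b : ContDiff ℝ 2 (Aop 0 g2) := castN' (contDiff_Aop 0 (castN hg2))
  have hu1c : ContDiff ℝ 2 (Aop 2 h2) := castN' (contDiff_Aop 2 (castN hh2))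
  have hu2a : ContDiff ℝ 2 (Aop 0 (Aop 1 f3)) := castN' (contDiff_Aop 0 (castN hA1f3))
  have hu2b : ContDiff ℝ 2 (Aop 0 g3) := castN' (contDiff_Aop 0 (castN hg3))
  have hu1 : ContDiff ℝ 2 u1 := (hu1a.add hu1b).add hu1c
  have hu2 : ContDiff ℝ 2 u2 := hu2a.add hu2b
  -- C¹ versions
  have one_le : (1 : WithTop ℕ∞) ≤ 2 := by norm_num
  refine ⟨![u0, u1, u2], ?_, ?_, ?_, ?_⟩
  · intro i
    fin_cases i
    · exact hu0
    · exact hu1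
    · exact hu2
  · -- equation 1
    intro x
    show pd 0 u1 x + pd 1 u0 x = 2 * ε12 x
    have dA : DifferentiableAt ℝ (Aop 0 (Aop 2 f2)) x :=
      (hu1a.differentiable two_ne_zero).differentiableAt
    have dB : DifferentiableAt ℝ (Aop 0 g2) x := (hu1b.differentiable two_ne_zero).differentiableAt
    have dC : DifferentiableAt ℝ (Aop 2 h2) x := (hu1c.differentiable two_ne_zero).differentiableAt
    have e1 : pd 0 u1 x
        = pd 0 (fun y => Aop 0 (Aop 2 f2) y + Aop 0 g2 y) x + pd 0 (Aop 2 h2) x :=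
      pd_add 0 (dA.add dB) dC
    rw [e1, pd_add 0 dA dB, pd_Aop_self 0 (hA2f2.of_le one_le) x,
      pd_Aop_self 0 (hg2.of_le one_le) x,
      pd_Aop_ne (by decide) (hh2.of_le one_le) x]
    have hz : ∀ y, pd 0 h2 y = 0 := by
      intro y
      rw [hh2def]
      rw [pd_comp_update 0 0 (h23.of_le (by norm_num)) 2 y]
      simp
    rw [Aop_congr 2 hz x, Aop_zero]
    have e2 : pd 1 u0 x = Aop 2 f1 x := pd_Aop_self 1 (hA2f1.of_le one_le) x
    rw [e2]
    have hsum : Aop 2 f2 x + Aop 2 f1 x = Aop 2 (fun y => f2 y + f1 y) x :=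
      (Aop_add 2 (hf2.continuous) (hf1.continuous) x).symm
    have hc : ∀ y, f2 y + f1 y = pd 2 (fun z => 2 * ε12 z) y := by
      intro y
      rw [pd_const_mul 2 2 ((h12.of_le (by norm_num : (1:WithTop ℕ∞) ≤ 3)).differentiable one_ne_zero).differentiableAt]
      rw [hf1def, hf2def]; ring
    have hfin : Aop 2 (fun y => f2 y + f1 y) x = 2 * ε12 x - 2 * ε12 (Function.update x 2 0) := by
      rw [Aop_congr 2 hc x]
      rw [Aop_pd_self 2 (contDiff_const.mul (h12.of_le (by norm_num : (1:WithTop ℕ∞) ≤ 3))) x]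
    have : g2 x = 2 * ε12 (Function.update x 2 0) := rfl
    linarith [hsum, hfin]
  · -- equation 2
    intro x
    show pd 0 u2 x + pd 2 u0 x = 2 * ε13 x
    have dA : DifferentiableAt ℝ (Aop 0 (Aop 1 f3)) x :=
      (hu2a.differentiable two_ne_zero).differentiableAt
    have dB : DifferentiableAt ℝ (Aop 0 g3) x := (hu2b.differentiable two_ne_zero).differentiableAt
    rw [show pd 0 u2 x = pd 0 (Aop 0 (Aop 1 f3)) x + pd 0 (Aop 0 g3) x from pd_add 0 dA dB,
      pd_Aop_self 0 (hA1f3.of_le one_le) x, pd_Aop_self 0 (hg3.of_le one_le) x]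
    have e2 : pd 2 u0 x = Aop 1 (pd 2 (Aop 2 f1)) x :=
      pd_Aop_ne (by decide) (hA2f1.of_le one_le) x
    rw [e2, Aop_congr 1 (fun y => pd_Aop_self 2 (hf1.of_le one_le) y) x]
    have hsum : Aop 1 f3 x + Aop 1 f1 x = Aop 1 (fun y => f3 y + f1 y) x :=
      (Aop_add 1 (hf3.continuous) (hf1.continuous) x).symm
    have hc : ∀ y, f3 y + f1 y = pd 1 (fun z => 2 * ε13 z) y := by
      intro y
      rw [pd_const_mul 1 2 ((h13.of_le (by norm_num : (1:WithTop ℕ∞) ≤ 3)).differentiable one_ne_zero).differentiableAt]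
      rw [hf1def, hf3def]; ring
    have hfin : Aop 1 (fun y => f3 y + f1 y) x = 2 * ε13 x - 2 * ε13 (Function.update x 1 0) := by
      rw [Aop_congr 1 hc x]
      rw [Aop_pd_self 1 (contDiff_const.mul (h13.of_le (by norm_num : (1:WithTop ℕ∞) ≤ 3))) x]
    have : g3 x = 2 * ε13 (Function.update x 1 0) := rfl
    linarith [hsum, hfin]
  · -- equation 3
    intro x
    show pd 1 u2 x + pd 2 u1 x = 2 * ε23 x
    have dA : DifferentiableAt ℝ (Aop 0 (Aop 1 f3)) x :=
      (hu2a.differentiable two_ne_zero).differentiableAt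
    have dB : DifferentiableAt ℝ (Aop 0 g3) x := (hu2b.differentiable two_ne_zero).differentiableAt
    have dC : DifferentiableAt ℝ (Aop 0 (Aop 2 f2)) x :=
      (hu1a.differentiable two_ne_zero).differentiableAt
    have dD : DifferentiableAt ℝ (Aop 0 g2) x := (hu1b.differentiable two_ne_zero).differentiableAt
    have dE : DifferentiableAt ℝ (Aop 2 h2) x := (hu1c.differentiable two_ne_zero).differentiableAt
    rw [show pd 1 u2 x = pd 1 (Aop 0 (Aop 1 f3)) x + pd 1 (Aop 0 g3) x from pd_add 1 dA dB]
    rw [pd_Aop_ne (by decide) (hA1f3.of_le one_le) x,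
      Aop_congr 0 (fun y => pd_Aop_self 1 (hf3.of_le one_le) y) x]
    rw [pd_Aop_ne (by decide) (hg3.of_le one_le) x]
    have hz3 : ∀ y, pd 1 g3 y = 0 := by
      intro y
      rw [hg3def, pd_comp_update 1 1 (h13.of_le (by norm_num)) 2 y]
      simp
    rw [Aop_congr 0 hz3 x, Aop_zero]
    have e1 : pd 2 u1 x
        = pd 2 (fun y => Aop 0 (Aop 2 f2) y + Aop 0 g2 y) x + pd 2 (Aop 2 h2) x :=
      pd_add 2 (dC.add dD) dE
    rw [e1, pd_add 2 dC dD]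
    rw [pd_Aop_ne (by decide) (hA2f2.of_le one_le) x,
      Aop_congr 0 (fun y => pd_Aop_self 2 (hf2.of_le one_le) y) x]
    rw [pd_Aop_ne (by decide) (hg2.of_le one_le) x]
    have hz2 : ∀ y, pd 2 g2 y = 0 := by
      intro y
      rw [hg2def, pd_comp_update 2 2 (h12.of_le (by norm_num)) 2 y]
      simp
    rw [Aop_congr 0 hz2 x, Aop_zero]
    rw [pd_Aop_self 2 (hh2.of_le one_le) x]
    have hsum : Aop 0 f3 x + Aop 0 f2 x = Aop 0 (fun y => f3 y + f2 y) x :=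
      (Aop_add 0 (hf3.continuous) (hf2.continuous) x).symm
    have hc : ∀ y, f3 y + f2 y = pd 0 (fun z => 2 * ε23 z) y := by
      intro y
      rw [pd_const_mul 0 2 ((h23.of_le (by norm_num : (1:WithTop ℕ∞) ≤ 3)).differentiable one_ne_zero).differentiableAt]
      rw [hf2def, hf3def]; ring
    have hfin : Aop 0 (fun y => f3 y + f2 y) x = 2 * ε23 x - 2 * ε23 (Function.update x 0 0) := by
      rw [Aop_congr 0 hc x]
      rw [Aop_pd_self 0 (contDiff_const.mul (h23.of_le (by norm_num : (1:WithTop ℕ∞) ≤ 3))) x]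
    have : h2 x = 2 * ε23 (Function.update x 0 0) := rfl
    linarith [hsum, hfin]
end

section
/- There is no triple of C² functions U₁, U₂, U₃ : ℝ³ → ℝ with ∂₁U₁ = 0, ∂₂U₂ = 0, ∂₃U₃ = 0 such that x₁x₂x₃ - ∂₁²(U₂ - U₃) = -∂₂²(U₃ - U₁) = -∂₃²(U₁ - U₂) holds identically on ℝ³. -/
/-- fderiv of a translate. -/
lemma fderiv_translate {f : (Fin 3 → ℝ) → ℝ} (hf : Differentiable ℝ f)
    (c x : Fin 3 → ℝ) :
    fderiv ℝ (fun y => f (y + c)) x = fderiv ℝ f (x + c) := by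
  have h : HasFDerivAt (fun y => f (y + c)) (fderiv ℝ f (x + c)) x := by
    have := (hf (x + c)).hasFDerivAt.comp x ((hasFDerivAt_id x).add_const c)
    simpa [Function.comp_def] using this
  exact h.fderiv

/-- If a differentiable function is invariant under translation by `c`, so is `pd j f`. -/
lemma pd_translate {f : (Fin 3 → ℝ) → ℝ} (hf : Differentiable ℝ f)
    (c : Fin 3 → ℝ) (hinv : ∀ x, f (x + c) = f x) (j : Fin 3) :
    ∀ x, pd j f (x + c) = pd j f x := by
  intro x
  have h1 : (fun y => f (y + c)) = f := funext hinv
  have h2 : fderiv ℝ f (x + c) = fderiv ℝ f x := by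
    rw [← fderiv_translate hf c x, h1]
  simp only [pd, h2]

lemma pd_differentiable {f : (Fin 3 → ℝ) → ℝ} (hf : ContDiff ℝ 2 f) (j : Fin 3) :
    Differentiable ℝ (pd j f) ∧ ContDiff ℝ 1 (pd j f) := by
  have h1 : ContDiff ℝ 1 (fderiv ℝ f) := hf.fderiv_right (by norm_num)
  have h2 : ContDiff ℝ 1 (pd j f) := h1.clm_apply contDiff_const
  exact ⟨h2.differentiable one_ne_zero, h2⟩

/-- If the `i`-th partial of `f` vanishes, `f` is invariant under `t • e i`. -/
lemma invariant_of_pd_zero {f : (Fin 3 → ℝ) → ℝ} (hf : Differentiable ℝ f)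
    (i : Fin 3) (h : ∀ x, pd i f x = 0) :
    ∀ (x : Fin 3 → ℝ) (t : ℝ), f (x + t • (Pi.single i 1 : Fin 3 → ℝ)) = f x := by
  intro x t
  set e : Fin 3 → ℝ := Pi.single i 1 with he
  have key : ∀ s : ℝ, HasDerivAt (fun u : ℝ => f (x + u • e)) 0 s := by
    intro s
    have hline : HasDerivAt (fun u : ℝ => x + u • e) e s := by
      have : HasDerivAt (fun u : ℝ => u • e) ((1 : ℝ) • e) s :=
        (hasDerivAt_id s).smul_const e
      simpa using this.const_add x
    have := (hf (x + s • e)).hasFDerivAt.comp_hasDerivAt s hline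
    have h0 : fderiv ℝ f (x + s • e) e = 0 := h (x + s • e)
    simpa [h0, Function.comp_def] using this
  have hconst : (fun u : ℝ => f (x + u • e)) t = (fun u : ℝ => f (x + u • e)) 0 := by
    have hd : Differentiable ℝ (fun u : ℝ => f (x + u • e)) :=
      fun s => (key s).differentiableAt
    have hd' : ∀ s, deriv (fun u : ℝ => f (x + u • e)) s = 0 :=
      fun s => (key s).deriv
    exact is_const_of_deriv_eq_zero hd hd' t 0
  simpa using hconst

theorem stmt15 :
    ¬ ∃ U : Fin 3 → (Fin 3 → ℝ) → ℝ,
      (∀ i, ContDiff ℝ 2 (U i)) ∧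
      (∀ i, ∀ x, pd i (U i) x = 0) ∧
      (∀ x : Fin 3 → ℝ,
        x 0 * x 1 * x 2 - pd 0 (pd 0 (fun y => U 1 y - U 2 y)) x
          = -(pd 1 (pd 1 (fun y => U 2 y - U 0 y)) x) ∧
        -(pd 1 (pd 1 (fun y => U 2 y - U 0 y)) x)
          = -(pd 2 (pd 2 (fun y => U 0 y - U 1 y)) x)) := by
  rintro ⟨U, hC, hP, hEq⟩
  have hdiffU : ∀ i, Differentiable ℝ (U i) := fun i => (hC i).differentiable (by norm_num)
  -- second partials
  set S : Fin 3 → Fin 3 → (Fin 3 → ℝ) → ℝ := fun j i => pd j (pd j (U i)) with hS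
  -- linearity: pd j (pd j (U a - U b)) = S j a - S j b
  have hlin : ∀ (j a b : Fin 3) (x : Fin 3 → ℝ),
      pd j (pd j (fun y => U a y - U b y)) x = S j a x - S j b x := by
    intro j a b x
    have h1 : pd j (fun y => U a y - U b y) = fun y => pd j (U a) y - pd j (U b) y := by
      funext y
      simp only [pd]
      rw [fderiv_fun_sub (hdiffU a y) (hdiffU b y)]
      simp
    rw [h1]
    calc pd j (fun y => pd j (U a) y - pd j (U b) y) x
        = fderiv ℝ (fun y => pd j (U a) y - pd j (U b) y) x (Pi.single j 1) := rfl
      _ = (fderiv ℝ (pd j (U a)) x - fderiv ℝ (pd j (U b)) x) (Pi.single j 1) := by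
            rw [fderiv_fun_sub ((pd_differentiable (hC a) j).1 x) ((pd_differentiable (hC b) j).1 x)]
      _ = S j a x - S j b x := by simp [hS, pd, ContinuousLinearMap.sub_apply]
  -- invariance of U i in direction i, propagated to S j i
  have hSinv : ∀ (j i : Fin 3) (x : Fin 3 → ℝ) (t : ℝ),
      S j i (x + t • (Pi.single i 1 : Fin 3 → ℝ)) = S j i x := by
    intro j i x t
    have h0 : ∀ y, U i (y + t • (Pi.single i 1 : Fin 3 → ℝ)) = U i y :=
      fun y => invariant_of_pd_zero (hdiffU i) i (hP i) y t
    have h1 : ∀ y, pd j (U i) (y + t • (Pi.single i 1 : Fin 3 → ℝ)) = pd j (U i) y :=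
      pd_translate (hdiffU i) _ h0 j
    exact pd_translate ((pd_differentiable (hC i) j).1) _ h1 j x
  -- the main pointwise identity : x0 x1 x2 = S 0 1 x - S 0 2 x + S 1 0 x - S 1 2 x
  have hmain : ∀ x : Fin 3 → ℝ,
      x 0 * x 1 * x 2 = S 0 1 x - S 0 2 x + S 1 0 x - S 1 2 x := by
    intro x
    have h := (hEq x).1
    rw [hlin 0 1 2 x, hlin 1 2 0 x] at h
    linarith
  -- evaluate at the 8 corners of the unit cube and take the alternating sum
  have inv : ∀ (j i : Fin 3) (x : Fin 3 → ℝ), S j i (x + Pi.single i 1) = S j i x := by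
    intro j i x
    have := hSinv j i x 1
    simpa using this
  set s0 : Fin 3 → ℝ := Pi.single 0 1 with hs0
  set s1 : Fin 3 → ℝ := Pi.single 1 1 with hs1
  set s2 : Fin 3 → ℝ := Pi.single 2 1 with hs2
  have c000 := hmain 0
  have c100 := hmain s0
  have c010 := hmain s1
  have c001 := hmain s2
  have c110 := hmain (s0 + s1)
  have c101 := hmain (s0 + s2)
  have c011 := hmain (s1 + s2)
  have c111 := hmain (s0 + s1 + s2)
  -- invariance instances (canonical corner forms)
  have i01a : S 0 1 s1 = S 0 1 0 := by
    have := inv 0 1 0; rw [show (0 : Fin 3 → ℝ) + Pi.single 1 1 = s1 by rw [hs1]; abel] at this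
    exact this
  have i01b : S 0 1 (s0 + s1) = S 0 1 s0 := by
    have := inv 0 1 s0; rw [show s0 + Pi.single 1 1 = s0 + s1 by rw [hs1]] at this
    exact this
  have i01c : S 0 1 (s1 + s2) = S 0 1 s2 := by
    have := inv 0 1 s2; rw [show s2 + Pi.single 1 1 = s1 + s2 by rw [hs1]; abel] at this
    exact this
  have i01d : S 0 1 (s0 + s1 + s2) = S 0 1 (s0 + s2) := by
    have := inv 0 1 (s0 + s2)
    rw [show s0 + s2 + Pi.single 1 1 = s0 + s1 + s2 by rw [hs1]; abel] at this
    exact this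
  have i02a : S 0 2 s2 = S 0 2 0 := by
    have := inv 0 2 0; rw [show (0 : Fin 3 → ℝ) + Pi.single 2 1 = s2 by rw [hs2]; abel] at this
    exact this
  have i02b : S 0 2 (s0 + s2) = S 0 2 s0 := by
    have := inv 0 2 s0; rw [show s0 + Pi.single 2 1 = s0 + s2 by rw [hs2]] at this
    exact this
  have i02c : S 0 2 (s1 + s2) = S 0 2 s1 := by
    have := inv 0 2 s1; rw [show s1 + Pi.single 2 1 = s1 + s2 by rw [hs2]] at this
    exact this
  have i02d : S 0 2 (s0 + s1 + s2) = S 0 2 (s0 + s1) := by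
    have := inv 0 2 (s0 + s1)
    rw [show s0 + s1 + Pi.single 2 1 = s0 + s1 + s2 by rw [hs2]] at this
    exact this
  have i12a : S 1 2 s2 = S 1 2 0 := by
    have := inv 1 2 0; rw [show (0 : Fin 3 → ℝ) + Pi.single 2 1 = s2 by rw [hs2]; abel] at this
    exact this
  have i12b : S 1 2 (s0 + s2) = S 1 2 s0 := by
    have := inv 1 2 s0; rw [show s0 + Pi.single 2 1 = s0 + s2 by rw [hs2]] at this
    exact this
  have i12c : S 1 2 (s1 + s2) = S 1 2 s1 := by
    have := inv 1 2 s1; rw [show s1 + Pi.single 2 1 = s1 + s2 by rw [hs2]] at this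
    exact this
  have i12d : S 1 2 (s0 + s1 + s2) = S 1 2 (s0 + s1) := by
    have := inv 1 2 (s0 + s1)
    rw [show s0 + s1 + Pi.single 2 1 = s0 + s1 + s2 by rw [hs2]] at this
    exact this
  have i10a : S 1 0 s0 = S 1 0 0 := by
    have := inv 1 0 0; rw [show (0 : Fin 3 → ℝ) + Pi.single 0 1 = s0 by rw [hs0]; abel] at this
    exact this
  have i10b : S 1 0 (s0 + s1) = S 1 0 s1 := by
    have := inv 1 0 s1; rw [show s1 + Pi.single 0 1 = s0 + s1 by rw [hs0]; abel] at this
    exact this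
  have i10c : S 1 0 (s0 + s2) = S 1 0 s2 := by
    have := inv 1 0 s2; rw [show s2 + Pi.single 0 1 = s0 + s2 by rw [hs0]; abel] at this
    exact this
  have i10d : S 1 0 (s0 + s1 + s2) = S 1 0 (s1 + s2) := by
    have := inv 1 0 (s1 + s2)
    rw [show s1 + s2 + Pi.single 0 1 = s0 + s1 + s2 by rw [hs0]; abel] at this
    exact this
  -- evaluate the coordinate products
  simp only [hs0, hs1, hs2] at c000 c100 c010 c001 c110 c101 c011 c111 i01a i01b i01c i01d i02a i02b i02c i02d i12a i12b i12c i12d i10a i10b i10c i10d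
  simp only [Pi.add_apply, Pi.zero_apply, Pi.single_apply] at c000 c100 c010 c001 c110 c101 c011 c111
  norm_num [Fin.ext_iff] at c000 c100 c010 c001 c110 c101 c011 c111
  linarith [c000, c100, c010, c001, c110, c101, c011, c111,
    i01a, i01b, i01c, i01d, i02a, i02b, i02c, i02d,
    i12a, i12b, i12c, i12d, i10a, i10b, i10c, i10d]
end
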